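/- There exists a constant β_θ > 0, depending only on βmax, l and T, such that for every initial output y₀ ∈ ℝ and every two triples (u, w, δ) and (u', w', δ') of input sequences u, u' ∈ ℝ^T, disturbance sequences w, w' ∈ ℝ^T, and initial shifts δ, δ' ∈ ℝ, with corresponding outputs y and y' generated by system (29), there exist real numbers θ_t(ξ) (0 ≤ ξ ≤ t ≤ T−1), υ_t(ξ) (0 ≤ ξ ≤ t−1 ≤ T−2), and ϑ_t (0 ≤ t ≤ T−1) such that for every t ∈ {0,…,T−1}: y(t+1) − y'(t+1) = Σ_{ξ=0}^{t} θ_t(ξ)·(u(ξ) − u'(ξ)) + (w(t) − w'(t)) + Σ_{ξ=0}^{t−1} υ_t(ξ)·(w(ξ) − w'(ξ)) + ϑ_t·(δ − δ'), with |θ_t(ξ)| ≤ β_θ, θ_t(t) ∈ [βmin, βmax], |υ_t(ξ)| ≤ β_θ, and |ϑ_t| ≤ β_θ. -/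

import Mathlib

/-- The argument vector `(y(t),…,y(t−l), u(t),…,u(t−n))` fed to the nonlinearity of
the system, with the conventions `y(i) = 0` and `u(i) = 0` for `i < 0`. -/
def sysArg (l n : ℕ) (y u : ℕ → ℝ) (t : ℕ) : Fin (l + n + 2) → ℝ :=
  fun j =>
    if (j : ℕ) ≤ l then (if (j : ℕ) ≤ t then y (t - (j : ℕ)) else 0)
    else (if (j : ℕ) - (l + 1) ≤ t then u (t - ((j : ℕ) - (l + 1))) else 0)

/-- `y` is the output trajectory of system (29) generated by the nonlinearity `f`,
initial output `y₀`, initial shift `δ`, input sequence `u` and disturbance `w`. -/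
def IsTrajW (l n T : ℕ) (f : (Fin (l + n + 2) → ℝ) → ℕ → ℝ) (y₀ δ : ℝ)
    (u w y : ℕ → ℝ) : Prop :=
  y 0 = y₀ + δ ∧ ∀ t, t < T → y (t + 1) = f (sysArg l n y u t) t + w t

lemma sum_range_add' (f : ℕ → ℝ) (m k : ℕ) :
    ∑ i ∈ Finset.range (m + k), f i
      = ∑ i ∈ Finset.range m, f i + ∑ i ∈ Finset.range k, f (m + i) := by
  induction k with
  | zero => simp
  | succ k ih =>
      rw [show m + (k+1) = (m+k)+1 from rfl, Finset.sum_range_succ, ih,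
        Finset.sum_range_succ]
      ring

lemma sum_range_rev (F : ℕ → ℝ) (N : ℕ) :
    ∑ ξ ∈ Finset.range (N+1), F (N - ξ) = ∑ ξ ∈ Finset.range (N+1), F ξ := by
  have := Finset.sum_range_reflect F (N+1)
  simpa using this

lemma mvt_sum {m : ℕ} (f : (Fin m → ℝ) → ℝ) (hf : ContDiff ℝ 1 f) (a b : Fin m → ℝ) :
    ∃ c, f a - f b = ∑ j : Fin m, fderiv ℝ f c (Pi.single j 1) * (a j - b j) := by
  have hdf : Differentiable ℝ f := hf.differentiable one_ne_zero
  set v : Fin m → ℝ := a - b with hv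
  have hline : ∀ s : ℝ, HasDerivAt (fun s : ℝ => b + s • v) v s := fun s => by
    simpa using ((hasDerivAt_id s).smul_const v).const_add b
  have hg : ∀ s : ℝ, HasDerivAt (fun s : ℝ => f (b + s • v)) (fderiv ℝ f (b + s • v) v) s :=
    fun s => ((hdf (b + s • v)).hasFDerivAt).comp_hasDerivAt s (hline s)
  have hcont : Continuous fun s : ℝ => f (b + s • v) :=
    hdf.continuous.comp (by continuity)
  obtain ⟨c, _, hceq⟩ := exists_hasDerivAt_eq_slope (fun s : ℝ => f (b + s • v))
    (fun s => fderiv ℝ f (b + s • v) v) one_pos hcont.continuousOn (fun s _ => hg s)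
  refine ⟨b + c • v, ?_⟩
  have h1 : b + (1:ℝ) • v = a := by simp [hv]
  have h0 : b + (0:ℝ) • v = b := by simp
  rw [h1, h0] at hceq
  have hsum : v = ∑ j : Fin m, v j • (Pi.single j 1 : Fin m → ℝ) := by
    conv_lhs => rw [← Finset.univ_sum_single v]
    refine Finset.sum_congr rfl fun j _ => ?_
    rw [← Pi.single_smul, smul_eq_mul, mul_one]
  set D := fderiv ℝ f (b + c • v) with hD
  calc f a - f b = D v := by rw [hceq]; ring
    _ = ∑ j, D (Pi.single j 1) * (a j - b j) := by
        rw [hsum, map_sum]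
        refine Finset.sum_congr rfl fun j _ => ?_
        rw [map_smul, smul_eq_mul, mul_comm]
        simp [hv]

/-- Lemma 11 of the paper: extended dynamical linearization of system (29) in the
presence of nonrepetitive disturbances and initial shifts, with a bound `β_θ`
depending only on `βmax`, `l` and `T`. -/
theorem stmt15 (l n T : ℕ) (hT : 1 ≤ T) (βmin βmax : ℝ)
    (hβmin : 0 < βmin) (hββ : βmin ≤ βmax) :
    ∃ βθ : ℝ, 0 < βθ ∧
      ∀ f : (Fin (l + n + 2) → ℝ) → ℕ → ℝ,
        (∀ t, t < T → ContDiff ℝ 1 fun x => f x t) →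
        (∀ t, t < T → ∀ x, ∀ i, |fderiv ℝ (fun x => f x t) x (Pi.single i 1)| ≤ βmax) →
        (∀ t, t < T → ∀ x,
          fderiv ℝ (fun x => f x t) x
              (Pi.single (⟨l + 1, by omega⟩ : Fin (l + n + 2)) 1)
            ∈ Set.Icc βmin βmax) →
        ∀ (y₀ : ℝ) (δ δ' : ℝ) (u u' w w' y y' : ℕ → ℝ),
          IsTrajW l n T f y₀ δ u w y → IsTrajW l n T f y₀ δ' u' w' y' →
          ∃ (θ υ : ℕ → ℕ → ℝ) (ϑ : ℕ → ℝ),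
            (∀ t, t < T →
              y (t + 1) - y' (t + 1)
                = ∑ ξ ∈ Finset.range (t + 1), θ t ξ * (u ξ - u' ξ)
                  + (w t - w' t)
                  + ∑ ξ ∈ Finset.range t, υ t ξ * (w ξ - w' ξ)
                  + ϑ t * (δ - δ')) ∧
            (∀ t, t < T → ∀ ξ, ξ ≤ t → |θ t ξ| ≤ βθ) ∧
            (∀ t, t < T → θ t t ∈ Set.Icc βmin βmax) ∧
            (∀ t, t < T → ∀ ξ, ξ < t → |υ t ξ| ≤ βθ) ∧
            (∀ t, t < T → |ϑ t| ≤ βθ) := by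
  have hβmax : 0 < βmax := lt_of_lt_of_le hβmin hββ
  set C : ℝ := ((l : ℝ) + 2) * (βmax + 1) with hCdef
  have hl0 : (0:ℝ) ≤ (l:ℝ) := Nat.cast_nonneg l
  have hC1 : 1 ≤ C := by rw [hCdef]; nlinarith
  have hC0 : 0 < C := lt_of_lt_of_le one_pos hC1
  refine ⟨C ^ T, pow_pos hC0 T, ?_⟩
  intro f hf hB hB2 y₀ δ δ' u u' w w' y y' hy hy'
  have key : ∀ m, m ≤ T →
      ∃ (θs υs : ℕ → ℝ) (ϑs : ℝ),
        (y m - y' m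
          = ∑ ξ ∈ Finset.range m, θs ξ * (u ξ - u' ξ)
            + ∑ ξ ∈ Finset.range m, υs ξ * (w ξ - w' ξ) + ϑs * (δ - δ')) ∧
        (∀ ξ, |θs ξ| ≤ C ^ m) ∧ (∀ ξ, |υs ξ| ≤ C ^ m) ∧ |ϑs| ≤ C ^ m ∧
        (∀ t', m = t' + 1 → θs t' ∈ Set.Icc βmin βmax ∧ υs t' = 1) := by
    intro m
    induction m using Nat.strong_induction_on with
    | _ m ih =>
      intro hm
      cases m with
      | zero =>
          refine ⟨0, 0, 1, ?_, ?_, ?_, ?_, ?_⟩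
          · simp [hy.1, hy'.1]
          · intro ξ; simp [pow_zero]
          · intro ξ; simp [pow_zero]
          · simp [pow_zero]
          · intro t' h; exact absurd h (by omega)
      | succ t =>
        have htT : t < T := hm
        have hstep : y (t+1) = f (sysArg l n y u t) t + w t := hy.2 t htT
        have hstep' : y' (t+1) = f (sysArg l n y' u' t) t + w' t := hy'.2 t htT
        set a := sysArg l n y u t with ha
        set b := sysArg l n y' u' t with hb
        obtain ⟨c, hc⟩ := mvt_sum (fun x => f x t) (hf t htT) a b
        set gnat : ℕ → ℝ := fun j => if hj : j < l + n + 2 then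
            fderiv ℝ (fun x => f x t) c (Pi.single (⟨j, hj⟩ : Fin (l+n+2)) 1) else 0 with hgnat
        set dnat : ℕ → ℝ := fun j => if hj : j < l + n + 2 then
            a ⟨j, hj⟩ - b ⟨j, hj⟩ else 0 with hdnat
        have hgb : ∀ j, |gnat j| ≤ βmax := by
          intro j
          simp only [hgnat]
          by_cases hj : j < l + n + 2
          · rw [dif_pos hj]; exact hB t htT c _
          · rw [dif_neg hj]; simpa using le_of_lt hβmax
        have hS : y (t+1) - y' (t+1)
            = ∑ j ∈ Finset.range (l+n+2), gnat j * dnat j + (w t - w' t) := by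
          have hc' : f a t - f b t
              = ∑ j : Fin (l+n+2), fderiv ℝ (fun x => f x t) c (Pi.single j 1) * (a j - b j) := hc
          rw [hstep, hstep', show f a t + w t - (f b t + w' t)
              = (f a t - f b t) + (w t - w' t) from by ring, hc']
          congr 1
          rw [← Fin.sum_univ_eq_sum_range (fun j => gnat j * dnat j) (l+n+2)]
          refine Finset.sum_congr rfl fun j _ => ?_
          simp only [hgnat, hdnat, dif_pos j.isLt, Fin.eta]
        set e : ℕ → ℝ := fun j => if j ≤ t then gnat j else 0 with he
        set hco : ℕ → ℝ := fun k => if k ≤ t then gnat (l+1+k) else 0 with hhco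
        have heb : ∀ j, |e j| ≤ βmax := by
          intro j; simp only [he]
          by_cases hj : j ≤ t
          · rw [if_pos hj]; exact hgb j
          · rw [if_neg hj]; simpa using le_of_lt hβmax
        have hhcb : ∀ k, |hco k| ≤ βmax := by
          intro k; simp only [hhco]
          by_cases hk : k ≤ t
          · rw [if_pos hk]; exact hgb _
          · rw [if_neg hk]; simpa using le_of_lt hβmax
        have hcz : ∀ k, n < k ∨ t < k → hco k = 0 := by
          intro k hk
          by_cases hkt : k ≤ t
          · rcases hk with hk | hk
            · simp only [hhco, if_pos hkt, hgnat]
              rw [dif_neg (by omega)]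
            · omega
          · simp only [hhco, if_neg hkt]
        have e1 : ∀ j ∈ Finset.range (l+1),
            gnat j * dnat j = e j * (y (t-j) - y' (t-j)) := by
          intro j hj
          have hjl : j ≤ l := by have := Finset.mem_range.mp hj; omega
          have hj2 : j < l+n+2 := by omega
          simp only [hdnat, he, dif_pos hj2, ha, hb, sysArg]
          by_cases hjt : j ≤ t <;> simp [hjl, hjt]
        have e2 : ∀ k ∈ Finset.range (n+1),
            gnat (l+1+k) * dnat (l+1+k) = hco k * (u (t-k) - u' (t-k)) := by
          intro k hk
          have hkn : k ≤ n := by have := Finset.mem_range.mp hk; omega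
          have hk2 : l+1+k < l+n+2 := by omega
          have h1 : ¬ (l+1+k ≤ l) := by omega
          have h2 : l+1+k - (l+1) = k := by omega
          simp only [hdnat, hhco, dif_pos hk2, ha, hb, sysArg]
          by_cases hkt : k ≤ t <;> simp [h1, h2, hkt]
        have hsplit : y (t+1) - y' (t+1)
            = (∑ j ∈ Finset.range (l+1), e j * (y (t-j) - y' (t-j))
              + ∑ k ∈ Finset.range (n+1), hco k * (u (t-k) - u' (t-k)))
              + (w t - w' t) := by
          rw [hS]
          congr 1
          rw [show l+n+2 = (l+1)+(n+1) by omega, sum_range_add']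
          congr 1
          · exact Finset.sum_congr rfl e1
          · exact Finset.sum_congr rfl e2
        -- choose coefficients for earlier times
        have hch : ∀ s : ℕ, ∃ (θs υs : ℕ → ℝ) (ϑs : ℝ),
            s ≤ t →
              ((y s - y' s = ∑ ξ ∈ Finset.range s, θs ξ * (u ξ - u' ξ)
                + ∑ ξ ∈ Finset.range s, υs ξ * (w ξ - w' ξ) + ϑs * (δ - δ')) ∧
              (∀ ξ, |θs ξ| ≤ C ^ s) ∧ (∀ ξ, |υs ξ| ≤ C ^ s) ∧ |ϑs| ≤ C ^ s) := by
          intro s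
          by_cases hs : s ≤ t
          · obtain ⟨θs, υs, ϑs, h1, h2, h3, h4, _⟩ := ih s (by omega) (by omega)
            exact ⟨θs, υs, ϑs, fun _ => ⟨h1, h2, h3, h4⟩⟩
          · exact ⟨0, 0, 0, fun h => absurd h hs⟩
        choose Θ Υ Φ hQ using hch
        -- the new coefficients
        have hCt : (1:ℝ) ≤ C ^ t := one_le_pow₀ hC1
        have hsb : ∀ X : ℕ → ℝ, (∀ j, |X j| ≤ C ^ t) →
            |∑ j ∈ Finset.range (l+1), e j * X j| ≤ ((l:ℝ)+1) * (βmax * C ^ t) := by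
          intro X hX
          calc |∑ j ∈ Finset.range (l+1), e j * X j|
              ≤ ∑ j ∈ Finset.range (l+1), |e j * X j| := Finset.abs_sum_le_sum_abs _ _
            _ ≤ ∑ _j ∈ Finset.range (l+1), βmax * C ^ t := by
                refine Finset.sum_le_sum fun j _ => ?_
                rw [abs_mul]
                exact mul_le_mul (heb j) (hX j) (abs_nonneg _) (le_of_lt hβmax)
            _ = ((l:ℝ)+1) * (βmax * C ^ t) := by
                rw [Finset.sum_const, Finset.card_range, nsmul_eq_mul]
                push_cast; ring
        have hΘb : ∀ j ξ, |(if ξ < t - j then Θ (t-j) ξ else 0)| ≤ C ^ t := by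
          intro j ξ
          by_cases hξ : ξ < t - j
          · rw [if_pos hξ]
            exact le_trans ((hQ (t-j) (by omega)).2.1 ξ) (pow_le_pow_right₀ hC1 (by omega))
          · rw [if_neg hξ, abs_zero]; exact le_trans zero_le_one hCt
        have hΥb : ∀ j ξ, |(if ξ < t - j then Υ (t-j) ξ else 0)| ≤ C ^ t := by
          intro j ξ
          by_cases hξ : ξ < t - j
          · rw [if_pos hξ]
            exact le_trans ((hQ (t-j) (by omega)).2.2.1 ξ) (pow_le_pow_right₀ hC1 (by omega))
          · rw [if_neg hξ, abs_zero]; exact le_trans zero_le_one hCt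
        have hΦb : ∀ j : ℕ, |Φ (t-j)| ≤ C ^ t := fun j =>
          le_trans (hQ (t-j) (by omega)).2.2.2 (pow_le_pow_right₀ hC1 (by omega))
        have hmain1 : βmax + ((l:ℝ)+1) * (βmax * C ^ t) ≤ C ^ (t+1) := by
          rw [pow_succ]
          have hX := hCt
          generalize C ^ t = X at hX ⊢
          rw [hCdef]
          nlinarith [mul_nonneg (sub_nonneg.2 hX) (show (0:ℝ) ≤ (l:ℝ) + βmax + 2 by positivity)]
        have hmain2 : 1 + ((l:ℝ)+1) * (βmax * C ^ t) ≤ C ^ (t+1) := by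
          rw [pow_succ]
          have hX := hCt
          generalize C ^ t = X at hX ⊢
          rw [hCdef]
          nlinarith [mul_nonneg (sub_nonneg.2 hX) (show (0:ℝ) ≤ (l:ℝ) + βmax + 2 by positivity)]
        refine ⟨fun ξ => (if t - ξ ≤ n then hco (t - ξ) else 0)
            + ∑ j ∈ Finset.range (l+1), e j * (if ξ < t - j then Θ (t-j) ξ else 0),
          fun ξ => (if ξ = t then 1 else 0)
            + ∑ j ∈ Finset.range (l+1), e j * (if ξ < t - j then Υ (t-j) ξ else 0),
          ∑ j ∈ Finset.range (l+1), e j * Φ (t-j), ?_, ?_, ?_, ?_, ?_⟩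
        · -- the linearization identity
          have pad : ∀ (s : ℕ) (G v : ℕ → ℝ), s ≤ t →
              ∑ ξ ∈ Finset.range s, G ξ * v ξ
                = ∑ ξ ∈ Finset.range (t+1), (if ξ < s then G ξ else 0) * v ξ := by
            intro s G v hs
            calc ∑ ξ ∈ Finset.range s, G ξ * v ξ
                = ∑ ξ ∈ Finset.range s, (if ξ < s then G ξ else 0) * v ξ :=
                  Finset.sum_congr rfl fun ξ hξ => by
                    rw [if_pos (Finset.mem_range.mp hξ)]
              _ = ∑ ξ ∈ Finset.range (t+1), (if ξ < s then G ξ else 0) * v ξ :=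
                  Finset.sum_subset (Finset.range_subset_range.mpr (by omega))
                    (fun ξ _ hξ => by
                      rw [if_neg (by simpa using hξ), zero_mul])
          have hexp : ∀ j ∈ Finset.range (l+1),
              e j * (y (t-j) - y' (t-j))
                = ∑ ξ ∈ Finset.range (t+1),
                    e j * ((if ξ < t-j then Θ (t-j) ξ else 0) * (u ξ - u' ξ))
                  + ∑ ξ ∈ Finset.range (t+1),
                    e j * ((if ξ < t-j then Υ (t-j) ξ else 0) * (w ξ - w' ξ))
                  + e j * (Φ (t-j) * (δ - δ')) := by
            intro j _
            by_cases hjt : j ≤ t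
            · have hQ' := hQ (t-j) (by omega)
              rw [hQ'.1, pad (t-j) (Θ (t-j)) (fun ξ => u ξ - u' ξ) (by omega),
                pad (t-j) (Υ (t-j)) (fun ξ => w ξ - w' ξ) (by omega),
                mul_add, mul_add, Finset.mul_sum, Finset.mul_sum]
            · have hej : e j = 0 := by simp [he, hjt]
              simp [hej]
        -- swap the double sums
          have swapθ : ∑ j ∈ Finset.range (l+1), ∑ ξ ∈ Finset.range (t+1),
                e j * ((if ξ < t-j then Θ (t-j) ξ else 0) * (u ξ - u' ξ))
              = ∑ ξ ∈ Finset.range (t+1),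
                  (∑ j ∈ Finset.range (l+1), e j * (if ξ < t-j then Θ (t-j) ξ else 0))
                    * (u ξ - u' ξ) := by
            rw [Finset.sum_comm]
            refine Finset.sum_congr rfl fun ξ _ => ?_
            rw [Finset.sum_mul]
            exact Finset.sum_congr rfl fun j _ => by ring
          have swapυ : ∑ j ∈ Finset.range (l+1), ∑ ξ ∈ Finset.range (t+1),
                e j * ((if ξ < t-j then Υ (t-j) ξ else 0) * (w ξ - w' ξ))
              = ∑ ξ ∈ Finset.range (t+1),
                  (∑ j ∈ Finset.range (l+1), e j * (if ξ < t-j then Υ (t-j) ξ else 0))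
                    * (w ξ - w' ξ) := by
            rw [Finset.sum_comm]
            refine Finset.sum_congr rfl fun ξ _ => ?_
            rw [Finset.sum_mul]
            exact Finset.sum_congr rfl fun j _ => by ring
          have hφ : ∑ j ∈ Finset.range (l+1), e j * (Φ (t-j) * (δ - δ'))
              = (∑ j ∈ Finset.range (l+1), e j * Φ (t-j)) * (δ - δ') := by
            rw [Finset.sum_mul]
            exact Finset.sum_congr rfl fun j _ => by ring
          have hA : ∑ j ∈ Finset.range (l+1), e j * (y (t-j) - y' (t-j))
              = ∑ ξ ∈ Finset.range (t+1),
                  (∑ j ∈ Finset.range (l+1), e j * (if ξ < t-j then Θ (t-j) ξ else 0))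
                    * (u ξ - u' ξ)
                + ∑ ξ ∈ Finset.range (t+1),
                  (∑ j ∈ Finset.range (l+1), e j * (if ξ < t-j then Υ (t-j) ξ else 0))
                    * (w ξ - w' ξ)
                + (∑ j ∈ Finset.range (l+1), e j * Φ (t-j)) * (δ - δ') := by
            rw [Finset.sum_congr rfl hexp, Finset.sum_add_distrib, Finset.sum_add_distrib,
              swapθ, swapυ, hφ]
          -- the direct input part
          have hU : ∑ k ∈ Finset.range (n+1), hco k * (u (t-k) - u' (t-k))
              = ∑ ξ ∈ Finset.range (t+1),
                  (if t - ξ ≤ n then hco (t-ξ) else 0) * (u ξ - u' ξ) := by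
            have l2 : ∑ ξ ∈ Finset.range (t+1),
                  (if ξ ≤ n then hco ξ else 0) * (u (t-ξ) - u' (t-ξ))
                = ∑ ξ ∈ Finset.range (t+1),
                  (if t - ξ ≤ n then hco (t-ξ) else 0) * (u ξ - u' ξ) := by
              calc ∑ ξ ∈ Finset.range (t+1),
                    (if ξ ≤ n then hco ξ else 0) * (u (t-ξ) - u' (t-ξ))
                  = ∑ ξ ∈ Finset.range (t+1),
                    (if t - (t-ξ) ≤ n then hco (t-(t-ξ)) else 0) * (u (t-ξ) - u' (t-ξ)) := by
                    refine Finset.sum_congr rfl fun ξ hξ => ?_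
                    have hξt : ξ ≤ t := by have := Finset.mem_range.mp hξ; omega
                    rw [Nat.sub_sub_self hξt]
                _ = ∑ ξ ∈ Finset.range (t+1),
                    (if t - ξ ≤ n then hco (t-ξ) else 0) * (u ξ - u' ξ) :=
                    sum_range_rev (fun ξ => (if t - ξ ≤ n then hco (t-ξ) else 0) * (u ξ - u' ξ)) t
            rw [← l2]
            set N := max n t with hN
            have r1 : ∑ k ∈ Finset.range (n+1), hco k * (u (t-k) - u' (t-k))
                = ∑ k ∈ Finset.range (N+1), hco k * (u (t-k) - u' (t-k)) :=
              Finset.sum_subset (Finset.range_subset_range.mpr (by omega))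
                (fun k _ hk => by
                  rw [hcz k (Or.inl (by simp only [Finset.mem_range] at hk; omega)), zero_mul])
            have r2 : ∑ ξ ∈ Finset.range (t+1), (if ξ ≤ n then hco ξ else 0) * (u (t-ξ) - u' (t-ξ))
                = ∑ ξ ∈ Finset.range (N+1), (if ξ ≤ n then hco ξ else 0) * (u (t-ξ) - u' (t-ξ)) :=
              Finset.sum_subset (Finset.range_subset_range.mpr (by omega))
                (fun ξ _ hξ => by
                  have hξt : t < ξ := by simp only [Finset.mem_range] at hξ; omega
                  by_cases hn : ξ ≤ n
                  · rw [if_pos hn, hcz ξ (Or.inr hξt), zero_mul]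
                  · rw [if_neg hn, zero_mul])
            have r3 : ∑ ξ ∈ Finset.range (N+1), (if ξ ≤ n then hco ξ else 0) * (u (t-ξ) - u' (t-ξ))
                = ∑ k ∈ Finset.range (N+1), hco k * (u (t-k) - u' (t-k)) := by
              refine Finset.sum_congr rfl fun ξ _ => ?_
              by_cases hn : ξ ≤ n
              · rw [if_pos hn]
              · rw [if_neg hn, hcz ξ (Or.inl (by omega)), zero_mul]
            rw [r1, r2, r3]
          have hW : (w t - w' t)
              = ∑ ξ ∈ Finset.range (t+1), (if ξ = t then (1:ℝ) else 0) * (w ξ - w' ξ) := by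
            have hc1 : ∀ ξ ∈ Finset.range (t+1),
                (if ξ = t then (1:ℝ) else 0) * (w ξ - w' ξ)
                  = if ξ = t then (w ξ - w' ξ) else 0 := fun ξ _ => by
              split <;> simp
            rw [Finset.sum_congr rfl hc1,
              Finset.sum_ite_eq' (Finset.range (t+1)) t (fun ξ => w ξ - w' ξ),
              if_pos (Finset.mem_range.mpr (by omega))]
          have hθsum : ∑ ξ ∈ Finset.range (t+1),
                ((if t - ξ ≤ n then hco (t - ξ) else 0)
                  + ∑ j ∈ Finset.range (l+1), e j * (if ξ < t - j then Θ (t-j) ξ else 0))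
                  * (u ξ - u' ξ)
              = ∑ ξ ∈ Finset.range (t+1), (if t - ξ ≤ n then hco (t-ξ) else 0) * (u ξ - u' ξ)
                + ∑ ξ ∈ Finset.range (t+1),
                  (∑ j ∈ Finset.range (l+1), e j * (if ξ < t-j then Θ (t-j) ξ else 0))
                    * (u ξ - u' ξ) := by
            rw [← Finset.sum_add_distrib]
            exact Finset.sum_congr rfl fun ξ _ => by ring
          have hυsum : ∑ ξ ∈ Finset.range (t+1),
                ((if ξ = t then (1:ℝ) else 0)
                  + ∑ j ∈ Finset.range (l+1), e j * (if ξ < t - j then Υ (t-j) ξ else 0))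
                  * (w ξ - w' ξ)
              = ∑ ξ ∈ Finset.range (t+1), (if ξ = t then (1:ℝ) else 0) * (w ξ - w' ξ)
                + ∑ ξ ∈ Finset.range (t+1),
                  (∑ j ∈ Finset.range (l+1), e j * (if ξ < t-j then Υ (t-j) ξ else 0))
                    * (w ξ - w' ξ) := by
            rw [← Finset.sum_add_distrib]
            exact Finset.sum_congr rfl fun ξ _ => by ring
          rw [hsplit, hA, hU, hW, hθsum, hυsum]
          ring
        · -- bound on θ
          intro ξ
          calc |(if t - ξ ≤ n then hco (t - ξ) else 0)
                + ∑ j ∈ Finset.range (l+1), e j * (if ξ < t - j then Θ (t-j) ξ else 0)|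
              ≤ |(if t - ξ ≤ n then hco (t - ξ) else 0)|
                + |∑ j ∈ Finset.range (l+1), e j * (if ξ < t - j then Θ (t-j) ξ else 0)| :=
                abs_add_le _ _
            _ ≤ βmax + ((l:ℝ)+1) * (βmax * C ^ t) := by
                refine add_le_add ?_ (hsb _ (fun j => hΘb j ξ))
                by_cases hn : t - ξ ≤ n
                · rw [if_pos hn]; exact hhcb _
                · rw [if_neg hn, abs_zero]; exact le_of_lt hβmax
            _ ≤ C ^ (t+1) := hmain1
        · -- bound on υ
          intro ξ
          calc |(if ξ = t then (1:ℝ) else 0)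
                + ∑ j ∈ Finset.range (l+1), e j * (if ξ < t - j then Υ (t-j) ξ else 0)|
              ≤ |(if ξ = t then (1:ℝ) else 0)|
                + |∑ j ∈ Finset.range (l+1), e j * (if ξ < t - j then Υ (t-j) ξ else 0)| :=
                abs_add_le _ _
            _ ≤ 1 + ((l:ℝ)+1) * (βmax * C ^ t) := by
                refine add_le_add ?_ (hsb _ (fun j => hΥb j ξ))
                by_cases hn : ξ = t
                · rw [if_pos hn]; simp
                · rw [if_neg hn, abs_zero]; exact zero_le_one
            _ ≤ C ^ (t+1) := hmain2
        · -- bound on ϑ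
          calc |∑ j ∈ Finset.range (l+1), e j * Φ (t-j)|
              ≤ ((l:ℝ)+1) * (βmax * C ^ t) := hsb _ hΦb
            _ ≤ C ^ (t+1) := by linarith [hmain2]
        · -- top coefficient
          intro t' h
          have ht' : t' = t := by omega
          rw [ht']
          have hz2 : ∑ j ∈ Finset.range (l+1), e j * (if t < t - j then Θ (t-j) t else 0) = 0 :=
            Finset.sum_eq_zero fun j _ => by rw [if_neg (by omega), mul_zero]
          have hz3 : ∑ j ∈ Finset.range (l+1), e j * (if t < t - j then Υ (t-j) t else 0) = 0 :=
            Finset.sum_eq_zero fun j _ => by rw [if_neg (by omega), mul_zero]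
          constructor
          · show (if t - t ≤ n then hco (t - t) else 0)
                + ∑ j ∈ Finset.range (l+1), e j * (if t < t - j then Θ (t-j) t else 0)
              ∈ Set.Icc βmin βmax
            rw [hz2, add_zero, Nat.sub_self, if_pos (Nat.zero_le n)]
            have hco0 : hco 0 = gnat (l+1) := by simp [hhco]
            rw [hco0]
            simp only [hgnat]
            rw [dif_pos (show l+1 < l+n+2 by omega)]
            exact hB2 t htT c
          · show (if t = t then (1:ℝ) else 0)
                + ∑ j ∈ Finset.range (l+1), e j * (if t < t - j then Υ (t-j) t else 0) = 1
            rw [if_pos rfl, hz3, add_zero]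
  have hfin : ∀ t : ℕ, ∃ (θt υt : ℕ → ℝ) (ϑt : ℝ), t < T →
      ((y (t+1) - y' (t+1)
        = ∑ ξ ∈ Finset.range (t+1), θt ξ * (u ξ - u' ξ) + (w t - w' t)
          + ∑ ξ ∈ Finset.range t, υt ξ * (w ξ - w' ξ) + ϑt * (δ - δ')) ∧
      (∀ ξ, |θt ξ| ≤ C ^ T) ∧ θt t ∈ Set.Icc βmin βmax ∧ (∀ ξ, |υt ξ| ≤ C ^ T) ∧ |ϑt| ≤ C ^ T) := by
    intro t
    by_cases ht : t < T
    · obtain ⟨θt, υt, ϑt, heq, hθb, hυb, hϑb, htop⟩ := key (t+1) (by omega)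
      obtain ⟨hIcc, hone⟩ := htop t rfl
      have hw : ∑ ξ ∈ Finset.range (t+1), υt ξ * (w ξ - w' ξ)
          = ∑ ξ ∈ Finset.range t, υt ξ * (w ξ - w' ξ) + (w t - w' t) := by
        rw [Finset.sum_range_succ, hone, one_mul]
      have hpow : C ^ (t+1) ≤ C ^ T := pow_le_pow_right₀ hC1 (by omega)
      exact ⟨θt, υt, ϑt, fun _ => ⟨by rw [heq, hw]; ring,
        fun ξ => le_trans (hθb ξ) hpow, hIcc,
        fun ξ => le_trans (hυb ξ) hpow, le_trans hϑb hpow⟩⟩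
    · exact ⟨0, 0, 0, fun h => absurd h ht⟩
  choose θ υ ϑ hP using hfin
  exact ⟨θ, υ, ϑ, fun t ht => (hP t ht).1,
    fun t ht ξ _ => (hP t ht).2.1 ξ,
    fun t ht => (hP t ht).2.2.1,
    fun t ht ξ _ => (hP t ht).2.2.2.1 ξ,
    fun t ht => (hP t ht).2.2.2.2⟩
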